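/- arXiv:1208.3076 — 3 statements merged into one kernel-verified Lean document; each statement's English description precedes it below -/
import Mathlib

section
/- Let W be a simply connected topological manifold and G a group. Then every locally constant G-valued Čech 1-cocycle on an open cover of W becomes a coboundary after passing to a refinement: given an open cover (U_i)_{i ∈ I} of W and locally constant maps g_{ij} : U_i ∩ U_j → G (for all i, j with U_i ∩ U_j ≠ ∅) satisfying g_{ii} = 1 and the cocycle condition g_{ki} · g_{jk} · g_{ij} = 1 on every nonempty triple intersection U_i ∩ U_j ∩ U_k, there exist an open cover (V_a)_{a ∈ A} of W refining (U_i) via a map τ : A → I with V_a ⊆ U_{τ(a)}, and locally constant maps h_a : V_a → G, such that g_{τ(a)τ(b)} = h_b⁻¹ · h_a on V_a ∩ V_b for all a, b with V_a ∩ V_b ≠ ∅. -/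
open Set

/-- Bundled data of a locally constant Čech 1-cocycle. -/
structure CechData (W : Type) [TopologicalSpace W] (G : Type) [Group G] (I : Type) where
  U : I → Set W
  g : I → I → W → G
  hUopen : ∀ i, IsOpen (U i)
  hgloc : ∀ i j, (U i ∩ U j).Nonempty →
    IsLocallyConstant (fun x : ↥(U i ∩ U j) => g i j x)
  hgid : ∀ i, ∀ x ∈ U i, g i i x = 1
  hgcocycle : ∀ i j k, ∀ x ∈ U i ∩ U j ∩ U k, g k i x * g j k x * g i j x = 1

namespace CechData

variable {W : Type} [TopologicalSpace W] {G : Type} [Group G] {I : Type}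
variable (D : CechData W G I)

lemma g_inv {i j : I} {x : W} (hx : x ∈ D.U i ∩ D.U j) : D.g j i x = (D.g i j x)⁻¹ := by
  have h := D.hgcocycle i j i x ⟨⟨hx.1, hx.2⟩, hx.1⟩
  rw [D.hgid i x hx.1] at h
  rw [one_mul] at h
  exact eq_inv_of_mul_eq_one_left h

/-- chart change: `g a c = g b c * g a b` on triple intersections. -/
lemma g_chg {a b c : I} {x : W} (hx : x ∈ D.U a ∩ D.U b ∩ D.U c) :
    D.g a c x = D.g b c x * D.g a b x := by
  have h := D.hgcocycle c a b x ⟨⟨hx.2, hx.1.1⟩, hx.1.2⟩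
  have h2 := D.g_inv (i := a) (j := c) ⟨hx.1.1, hx.2⟩
  rw [h2] at h
  have := mul_eq_one_iff_eq_inv.mp h
  rw [this, inv_inv]

lemma g_const {i j : I} {s : Set W} (hs : s ⊆ D.U i ∩ D.U j) (hc : IsPreconnected s)
    {x y : W} (hx : x ∈ s) (hy : y ∈ s) : D.g i j x = D.g i j y := by
  have hne : (D.U i ∩ D.U j).Nonempty := ⟨x, hs hx⟩
  have hloc := D.hgloc i j hne
  haveI : PreconnectedSpace s := Subtype.preconnectedSpace hc
  let f : s → ↥(D.U i ∩ D.U j) := fun z => ⟨z.1, hs z.2⟩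
  have hf : Continuous f := Continuous.subtype_mk continuous_subtype_val _
  have : IsLocallyConstant (fun z : s => D.g i j z) := by
    have := hloc.comp_continuous hf
    exact this
  exact this.apply_eq_of_preconnectedSpace ⟨x, hx⟩ ⟨y, hy⟩

end CechData

section dd

variable {G : Type} [Group G]

/-- `dd F n = F n * F (n-1) * ⋯ * F 0`. -/
def dd (F : ℕ → G) : ℕ → G
  | 0 => F 0
  | (n+1) => F (n+1) * dd F n

lemma dd_congr {F F' : ℕ → G} : ∀ {n : ℕ}, (∀ k ≤ n, F k = F' k) → dd F n = dd F' n
  | 0, h => by simp [dd, h 0 le_rfl]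
  | (n+1), h => by
      rw [dd, dd, h (n+1) le_rfl, dd_congr (fun k hk => h k (hk.trans (Nat.le_succ n)))]

lemma dd_block (F : ℕ → G) (a : ℕ) : ∀ m : ℕ, 0 < m →
    (∀ r, 0 < r → r < m → F (a + r) = 1) → dd F (a + m) = F (a + m) * dd F a
  | 0, h, _ => absurd h (lt_irrefl 0)
  | 1, _, _ => by rw [show a + 1 = (a) + 1 from rfl, dd]
  | (m+2), _, h1 => by
      rw [show a + (m+2) = (a + (m+1)) + 1 from by ring, dd,
        dd_block F a (m+1) (Nat.succ_pos m) (fun r hr hrm => h1 r hr (hrm.trans (Nat.lt_succ_self _))),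
        h1 (m+1) (Nat.succ_pos m) (by omega), one_mul,
        show (a + (m+1)) + 1 = a + (m+2) from by ring]

lemma dd_two {F F' : ℕ → G} {j n : ℕ} (hoff : ∀ k ≤ n, k ≠ j → k ≠ j + 1 → F k = F' k)
    (hswap : F (j+1) * F j = F' (j+1) * F' j) (hjn : j + 1 ≤ n) : dd F n = dd F' n := by
  have base : dd F (j+1) = dd F' (j+1) := by
    cases j with
    | zero => simpa [dd] using hswap
    | succ i =>
      have h1 : dd F (i+1+1) = (F (i+2) * F (i+1)) * dd F i := by
        rw [dd, dd, mul_assoc]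
      have h2 : dd F' (i+1+1) = (F' (i+2) * F' (i+1)) * dd F' i := by
        rw [dd, dd, mul_assoc]
      rw [h1, h2, hswap,
        dd_congr (fun k hk => hoff k (by omega) (by omega) (by omega))]
  have climb : ∀ d, j + 1 + d ≤ n → dd F (j+1+d) = dd F' (j+1+d) := by
    intro d
    induction d with
    | zero => intro _; exact base
    | succ e ih =>
      intro hle
      rw [show j+1+(e+1) = (j+1+e)+1 from rfl, dd, dd, ih (by omega),
        hoff (j+1+e+1) (by omega) (by omega) (by omega)]
  obtain ⟨d, rfl⟩ : ∃ d, n = j + 1 + d := ⟨n - (j+1), by omega⟩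
  exact climb d (le_refl _)
section Chains

variable {W : Type} [TopologicalSpace W] {G : Type} [Group G] {I : Type}

/-- The `k`-th factor of the developing product. -/
noncomputable def Fc (D : CechData W G I) (γ : ℝ → W) (n : ℕ) (c : ℕ → I) (k : ℕ) : G :=
  D.g (c k) (c (k+1)) (γ ((k : ℝ) / (n : ℝ)))

/-- The developing element of a chain. -/
noncomputable def dev (D : CechData W G I) (γ : ℝ → W) (n : ℕ) (c : ℕ → I) : G := dd (Fc D γ n c) n

/-- `c` is a chain for `γ` with `n` (uniform) segments; `c 0` is the start chart
and `c (n+1)` the end chart. -/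
def DevChain (D : CechData W G I) (γ : ℝ → W) (n : ℕ) (c : ℕ → I) : Prop :=
  0 < n ∧ (∀ k, k < n → ∀ s : ℝ, (k : ℝ)/n ≤ s → s ≤ ((k : ℝ)+1)/n → γ s ∈ D.U (c (k+1)))
    ∧ γ 0 ∈ D.U (c 0) ∧ γ 1 ∈ D.U (c (n+1))

variable {D : CechData W G I} {γ : ℝ → W} {n : ℕ} {c : ℕ → I}

lemma node_mem_left (h : DevChain D γ n c) {k : ℕ} (hk : k ≤ n) :
    γ ((k:ℝ)/n) ∈ D.U (c k) := by
  obtain ⟨hn, hseg, h0, h1⟩ := h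
  have hn' : (0:ℝ) < n := Nat.cast_pos.mpr hn
  rcases Nat.eq_zero_or_pos k with rfl | hkpos
  · simpa using h0
  · obtain ⟨j, rfl⟩ : ∃ j, k = j + 1 := ⟨k - 1, by omega⟩
    have := hseg j (by omega) (((j:ℝ)+1)/n) (by gcongr; linarith) (by push_cast; exact le_refl _)
    convert this using 3
    push_cast; ring

lemma node_mem_right (h : DevChain D γ n c) {k : ℕ} (hk : k ≤ n) :
    γ ((k:ℝ)/n) ∈ D.U (c (k+1)) := by
  obtain ⟨hn, hseg, h0, h1⟩ := h
  have hn' : (0:ℝ) < n := Nat.cast_pos.mpr hn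
  rcases eq_or_lt_of_le hk with rfl | hlt
  · have : ((k:ℝ))/(k:ℝ) = 1 := div_self (by positivity)
    rw [this]; exact h1
  · exact hseg k hlt _ (le_refl _) (by gcongr; linarith)

lemma dev_change_at (h : DevChain D γ n c) (hγ : ContinuousOn γ (Set.Icc (0:ℝ) 1))
    {j : ℕ} (hj : j + 1 ≤ n) (i' : I)
    (hseg : ∀ s : ℝ, (j:ℝ)/n ≤ s → s ≤ ((j:ℝ)+1)/n → γ s ∈ D.U i') :
    dev D γ n (Function.update c (j+1) i') = dev D γ n c := by
  have hn := h.1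
  have hn' : (0:ℝ) < n := Nat.cast_pos.mpr hn
  set b := Function.update c (j+1) i' with hb
  -- memberships
  have hxj : ((j:ℝ)+1)/n = ((j+1:ℕ):ℝ)/n := by push_cast; ring
  set x := γ ((j:ℝ)/n) with hx
  set y := γ (((j+1:ℕ):ℝ)/n) with hy
  have hxd : x ∈ D.U (c j) := node_mem_left h (by omega)
  have hxo : x ∈ D.U (c (j+1)) := node_mem_right h (by omega)
  have hxn : x ∈ D.U i' := hseg _ (le_refl _) (by gcongr; linarith)
  have hyo : y ∈ D.U (c (j+1)) := node_mem_left h (by omega)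
  have hyn : y ∈ D.U i' := by
    refine hseg _ ?_ ?_
    · push_cast; gcongr <;> linarith
    · push_cast; exact le_refl _
  have hye : y ∈ D.U (c (j+2)) := node_mem_right h (by omega)
  -- constancy of g (c (j+1)) i' on segment j
  have hIccsub : Set.Icc ((j:ℝ)/n) (((j:ℝ)+1)/n) ⊆ Set.Icc (0:ℝ) 1 := by
    apply Set.Icc_subset_Icc
    · positivity
    · rw [div_le_one hn']
      have : ((j:ℝ)+1) ≤ (n:ℝ) := by
        have : ((j+1:ℕ):ℝ) ≤ (n:ℝ) := Nat.cast_le.mpr hj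
        push_cast at this; linarith
      linarith
  have himg : IsPreconnected (γ '' Set.Icc ((j:ℝ)/n) (((j:ℝ)+1)/n)) :=
    (isPreconnected_Icc).image γ (hγ.mono hIccsub)
  have hsub : γ '' Set.Icc ((j:ℝ)/n) (((j:ℝ)+1)/n) ⊆ D.U (c (j+1)) ∩ D.U i' := by
    rintro - ⟨s, hs, rfl⟩
    exact ⟨h.2.1 j (by omega) s hs.1 hs.2, hseg s hs.1 hs.2⟩
  have hxmem : x ∈ γ '' Set.Icc ((j:ℝ)/n) (((j:ℝ)+1)/n) :=
    ⟨_, ⟨le_refl _, by gcongr <;> linarith⟩, rfl⟩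
  have hymem : y ∈ γ '' Set.Icc ((j:ℝ)/n) (((j:ℝ)+1)/n) := by
    refine ⟨((j:ℝ)+1)/n, ⟨by gcongr <;> linarith, le_refl _⟩, ?_⟩
    rw [hxj]
  have hconst : D.g (c (j+1)) i' x = D.g (c (j+1)) i' y :=
    D.g_const hsub himg hxmem hymem
  -- the two-factor computation
  have hswap : Fc D γ n b (j+1) * Fc D γ n b j = Fc D γ n c (j+1) * Fc D γ n c j := by
    have hbj : b j = c j := Function.update_of_ne (by omega) _ _
    have hbj1 : b (j+1) = i' := Function.update_self _ _ _
    have hbj2 : b (j+2) = c (j+2) := Function.update_of_ne (by omega) _ _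
    have e1 : Fc D γ n b j = D.g (c j) i' x := by
      rw [Fc, hbj, hbj1]
    have e2 : Fc D γ n c j = D.g (c j) (c (j+1)) x := rfl
    have e3 : Fc D γ n b (j+1) = D.g i' (c (j+2)) y := by
      rw [Fc, hbj1, hbj2, hy, Nat.cast_add, Nat.cast_one]
    have e4 : Fc D γ n c (j+1) = D.g (c (j+1)) (c (j+2)) y := by
      rw [Fc, hy, Nat.cast_add, Nat.cast_one]
    rw [e1, e2, e3, e4]
    have r1 : D.g (c j) i' x = D.g (c (j+1)) i' x * D.g (c j) (c (j+1)) x :=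
      D.g_chg ⟨⟨hxd, hxo⟩, hxn⟩
    have r2 : D.g i' (c (j+2)) y = D.g (c (j+1)) (c (j+2)) y * D.g i' (c (j+1)) y :=
      D.g_chg ⟨⟨hyn, hyo⟩, hye⟩
    have r3 : D.g i' (c (j+1)) y = (D.g (c (j+1)) i' y)⁻¹ := D.g_inv ⟨hyo, hyn⟩
    rw [r1, r2, r3, ← hconst]
    group
  -- off-factors agree
  have hoff : ∀ k ≤ n, k ≠ j → k ≠ j + 1 → Fc D γ n b k = Fc D γ n c k := by
    intro k _ hk1 hk2
    simp only [Fc, hb, Function.update_of_ne hk2,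
      Function.update_of_ne (show k + 1 ≠ j + 1 by omega)]
  -- conclude by product surgery
  exact dd_two hoff hswap hj

end Chains
section Chains2

variable {W : Type} [TopologicalSpace W] {G : Type} [Group G] {I : Type}
variable {D : CechData W G I} {γ : ℝ → W} {n m : ℕ} {c : ℕ → I}

lemma dev_congr' {c' : ℕ → I} (h : ∀ k ≤ n + 1, c k = c' k) :
    dev D γ n c = dev D γ n c' :=
  dd_congr fun k hk => by rw [Fc, Fc, h k (by omega), h (k+1) (by omega)]

lemma dev_eq_of_chains (hγ : ContinuousOn γ (Set.Icc (0:ℝ) 1))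
    {c' : ℕ → I} (h1 : DevChain D γ n c) (h2 : DevChain D γ n c')
    (h0 : c 0 = c' 0) (hend : c (n+1) = c' (n+1)) :
    dev D γ n c' = dev D γ n c := by
  have hn := h1.1
  let mix : ℕ → ℕ → I := fun m => Nat.rec c (fun m ih => Function.update ih (m+1) (c' (m+1))) m
  have hmix0 : mix 0 = c := rfl
  have hmixS : ∀ m, mix (m+1) = Function.update (mix m) (m+1) (c' (m+1)) := fun _ => rfl
  have key : ∀ m, m ≤ n + 1 →
      DevChain D γ n (mix m) ∧ dev D γ n (mix m) = dev D γ n c ∧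
      (∀ k, (k ≤ m → mix m k = c' k) ∧ (m < k → mix m k = c k)) := by
    intro m
    induction m with
    | zero =>
      intro _
      refine ⟨h1, rfl, fun k => ⟨fun hk => ?_, fun _ => rfl⟩⟩
      interval_cases k
      exact h0
    | succ m ih =>
      intro hm1
      obtain ⟨hch, hdev, hvals⟩ := ih (by omega)
      rcases eq_or_lt_of_le hm1 with heq | hlt
      · -- m + 1 = n + 1 : updating the endpoint with an equal value
        have hsame : c' (m+1) = mix m (m+1) := by
          rw [(hvals (m+1)).2 (by omega)]
          rw [← heq] at hend
          exact hend.symm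
        have : mix (m+1) = mix m := by
          rw [hmixS, hsame, Function.update_eq_self]
        rw [this]
        refine ⟨hch, hdev, fun k => ⟨fun hk => ?_, fun hk => (hvals k).2 (by omega)⟩⟩
        rcases Nat.lt_or_ge k (m+1) with h | h
        · exact (hvals k).1 (by omega)
        · have : k = m + 1 := by omega
          subst this
          exact hsame.symm
      · -- m + 1 ≤ n : interior update
        have hm1n : m + 1 ≤ n := by omega
        have hseg : ∀ s : ℝ, ((m:ℝ))/n ≤ s → s ≤ ((m:ℝ)+1)/n → γ s ∈ D.U (c' (m+1)) :=
          fun s hs1 hs2 => h2.2.1 m (by omega) s hs1 hs2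
        have hchain' : DevChain D γ n (mix (m+1)) := by
          rw [hmixS]
          refine ⟨hn, fun k hk s hs1 hs2 => ?_, ?_, ?_⟩
          · rcases eq_or_ne (k+1) (m+1) with he | hne
            · rw [he, Function.update_self]
              exact hseg s (by rw [show k = m by omega] at hs1; exact hs1)
                (by rw [show k = m by omega] at hs2; exact hs2)
            · rw [Function.update_of_ne hne]
              exact hch.2.1 k hk s hs1 hs2
          · rw [Function.update_of_ne (by omega)]
            exact hch.2.2.1
          · rw [Function.update_of_ne (by omega)]
            exact hch.2.2.2
        have hdev' : dev D γ n (mix (m+1)) = dev D γ n c := by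
          rw [hmixS, dev_change_at hch hγ hm1n (c' (m+1)) hseg, hdev]
        refine ⟨hchain', hdev', fun k => ⟨fun hk => ?_, fun hk => ?_⟩⟩
        · rw [hmixS]
          rcases eq_or_ne k (m+1) with rfl | hne
          · rw [Function.update_self]
          · rw [Function.update_of_ne hne]
            exact (hvals k).1 (by omega)
        · rw [hmixS, Function.update_of_ne (by omega)]
          exact (hvals k).2 (by omega)
  obtain ⟨_, hdev, hvals⟩ := key (n+1) le_rfl
  rw [← hdev]
  exact dev_congr' (fun k hk => ((hvals k).1 hk).symm)

/-- Chart assignment for the uniform refinement of a chain. -/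
def refineC (c : ℕ → I) (n m : ℕ) : ℕ → I := fun k =>
  if k = 0 then c 0 else if n * m < k then c (n+1) else c ((k-1)/m + 1)

lemma refineC_zero : refineC c n m 0 = c 0 := rfl

lemma refineC_top : refineC c n m (n*m+1) = c (n+1) := by
  simp [refineC]

lemma refineC_eval {k : ℕ} (h1 : 1 ≤ k) (h2 : k ≤ n * m) :
    refineC c n m k = c ((k-1)/m + 1) := by
  simp only [refineC, if_neg (by omega : ¬ k = 0), if_neg (by omega : ¬ n*m < k)]

lemma refine_chain (h : DevChain D γ n c) (hm : 0 < m) :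
    DevChain D γ (n*m) (refineC c n m) ∧ dev D γ (n*m) (refineC c n m) = dev D γ n c := by
  obtain ⟨hn, hseg, h0, h1⟩ := h
  have hnm : 0 < n * m := Nat.mul_pos hn hm
  have hn' : (0:ℝ) < n := Nat.cast_pos.mpr hn
  have hm' : (0:ℝ) < m := Nat.cast_pos.mpr hm
  have hnm' : (0:ℝ) < (n*m : ℕ) := Nat.cast_pos.mpr hnm
  -- segment inclusion
  have hsegincl : ∀ k, k < n * m → ∀ s : ℝ,
      ((k:ℝ))/(n*m : ℕ) ≤ s → s ≤ ((k:ℝ)+1)/(n*m : ℕ) →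
      ((k/m : ℕ) : ℝ)/n ≤ s ∧ s ≤ (((k/m : ℕ) : ℝ)+1)/n := by
    intro k hk s hs1 hs2
    set q := k / m with hq
    have hqm : m * q + k % m = k := Nat.div_add_mod k m
    have hmod : k % m < m := Nat.mod_lt _ hm
    have hql : m * q ≤ k := by omega
    have hqu : k + 1 ≤ m * q + m := by omega
    have hql' : (m:ℝ) * (q:ℝ) ≤ (k:ℝ) := by exact_mod_cast hql
    have hqu' : (k:ℝ) + 1 ≤ (m:ℝ) * (q:ℝ) + (m:ℝ) := by exact_mod_cast hqu
    constructor
    · refine le_trans ?_ hs1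
      rw [div_le_div_iff₀ hn' hnm']
      push_cast
      nlinarith [mul_le_mul_of_nonneg_right hql' hn'.le]
    · refine le_trans hs2 ?_
      rw [div_le_div_iff₀ hnm' hn']
      push_cast
      nlinarith [mul_le_mul_of_nonneg_right hqu' hn'.le]
  have hchain : DevChain D γ (n*m) (refineC c n m) := by
    refine ⟨hnm, fun k hk s hs1 hs2 => ?_, ?_, ?_⟩
    · have hev : refineC c n m (k+1) = c (k/m + 1) := by
        rw [refineC_eval (by omega) (by omega)]
        congr 2
      rw [hev]
      have hqn : k / m < n := Nat.div_lt_of_lt_mul (by rwa [Nat.mul_comm n m] at hk)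
      obtain ⟨hs1', hs2'⟩ := hsegincl k hk s hs1 hs2
      exact hseg (k/m) hqn s hs1' hs2'
    · rw [refineC_zero]; exact h0
    · rw [refineC_top]; exact h1
  refine ⟨hchain, ?_⟩
  -- factor computations
  have hF0 : Fc D γ (n*m) (refineC c n m) 0 = Fc D γ n c 0 := by
    have e1 : refineC c n m 1 = c 1 := by
      rw [refineC_eval le_rfl (by omega)]
      congr 2
      simp
    rw [Fc, Fc, refineC_zero, e1]
    norm_num
  have hFq : ∀ q, 1 ≤ q → q ≤ n → Fc D γ (n*m) (refineC c n m) (q*m) = Fc D γ n c q := by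
    intro q hq1 hqn
    obtain ⟨p, rfl⟩ : ∃ p, q = p + 1 := ⟨q - 1, by omega⟩
    have hqm1 : (p+1)*m - 1 = (m-1) + m * p := by
      have : (p+1)*m = m * p + m := by ring
      omega
    have e1 : refineC c n m ((p+1)*m) = c (p+1) := by
      rw [refineC_eval (by nlinarith) (by nlinarith), hqm1]
      congr 2
      rw [Nat.add_mul_div_left _ _ hm, Nat.div_eq_of_lt (by omega)]
      omega
    have e2 : refineC c n m ((p+1)*m + 1) = c (p+1+1) := by
      rcases eq_or_lt_of_le hqn with rfl | hlt
      · exact refineC_top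
      · rw [refineC_eval (by omega) (by nlinarith), Nat.add_sub_cancel,
          Nat.mul_div_cancel _ hm]
    have e3 : (((p+1)*m : ℕ) : ℝ)/((n*m : ℕ) : ℝ) = ((p+1 : ℕ) : ℝ)/(n : ℝ) := by
      push_cast
      rw [mul_div_mul_right _ _ (ne_of_gt hm')]
    rw [Fc, Fc, e1, e2, e3]
  have hFr : ∀ q r, q < n → 0 < r → r < m →
      Fc D γ (n*m) (refineC c n m) (q*m + r) = 1 := by
    intro q r hqn hr hrm
    have e1 : refineC c n m (q*m + r) = c (q+1) := by
      rw [refineC_eval (by omega) (by nlinarith)]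
      congr 2
      have : q*m + r - 1 = (r-1) + m * q := by
        have : q*m = m*q := Nat.mul_comm q m
        omega
      rw [this, Nat.add_mul_div_left _ _ hm, Nat.div_eq_of_lt (by omega), Nat.zero_add]
    have e2 : refineC c n m (q*m + r + 1) = c (q+1) := by
      rw [refineC_eval (by omega) (by nlinarith)]
      congr 2
      have : q*m + r + 1 - 1 = r + m * q := by
        have : q*m = m*q := Nat.mul_comm q m
        omega
      rw [this, Nat.add_mul_div_left _ _ hm, Nat.div_eq_of_lt (by omega), Nat.zero_add]
    have hklt : q*m + r < n*m := by nlinarith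
    have hmem : γ (((q*m + r : ℕ) : ℝ)/((n*m : ℕ) : ℝ)) ∈ D.U (c (q+1)) := by
      have hdiv : (q*m + r) / m = q := by
        rw [show q*m + r = r + m*q by ring, Nat.add_mul_div_left _ _ hm,
          Nat.div_eq_of_lt hrm, Nat.zero_add]
      have hs := hsegincl (q*m+r) hklt (((q*m+r : ℕ) : ℝ)/((n*m : ℕ) : ℝ)) le_rfl
        (by gcongr <;> linarith)
      rw [hdiv] at hs
      exact hseg q hqn _ hs.1 hs.2
    rw [Fc, e1, e2]
    exact D.hgid _ _ hmem
  -- main induction over coarse segments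
  have main : ∀ q, q ≤ n →
      dd (Fc D γ (n*m) (refineC c n m)) (q*m) = dd (Fc D γ n c) q := by
    intro q
    induction q with
    | zero =>
      intro _
      simp only [Nat.zero_mul, dd]
      exact hF0
    | succ q ih =>
      intro hq
      have hb := dd_block (Fc D γ (n*m) (refineC c n m)) (q*m) m hm
        (fun r hr hrm => hFr q r (by omega) hr hrm)
      rw [show (q+1)*m = q*m + m by ring, hb, ih (by omega),
        show q*m + m = (q+1)*m by ring, hFq (q+1) (by omega) hq]
      rfl
  exact main n le_rfl


lemma dev_welldef (hγ : ContinuousOn γ (Set.Icc (0:ℝ) 1))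
    {p : ℕ} {e : ℕ → I} (h1 : DevChain D γ n c) (h2 : DevChain D γ p e)
    (h0 : c 0 = e 0) (hend : c (n+1) = e (p+1)) :
    dev D γ n c = dev D γ p e := by
  have hn := h1.1
  have hp := h2.1
  obtain ⟨hc1, he1⟩ := refine_chain h1 hp
  obtain ⟨hc2, he2⟩ := refine_chain h2 hn
  rw [← he1, ← he2]
  have hcomm : p * n = n * p := Nat.mul_comm p n
  have hc2' : DevChain D γ (n*p) (refineC e p n) := by rwa [hcomm] at hc2
  have hmid : dev D γ (p*n) (refineC e p n) = dev D γ (n*p) (refineC e p n) := by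
    rw [hcomm]
  rw [hmid]
  refine (dev_eq_of_chains hγ hc1 hc2' ?_ ?_).symm
  · rw [refineC_zero, refineC_zero, h0]
  · rw [refineC_top, show n*p = p*n from Nat.mul_comm n p, refineC_top]
    exact hend

end Chains2
section Homotopy

variable {W : Type} [TopologicalSpace W] {G : Type} [Group G] {I : Type}
variable {D : CechData W G I}

lemma chain_exists {γ : ℝ → W} (hγ : Continuous γ)
    (hcov : ∀ w : W, ∃ i, w ∈ D.U i) (istart iend : I)
    (h0 : γ 0 ∈ D.U istart) (h1 : γ 1 ∈ D.U iend) :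
    ∃ n c, DevChain D γ n c ∧ c 0 = istart ∧ c (n+1) = iend := by
  obtain ⟨δ, hδ, hLeb⟩ := lebesgue_number_lemma_of_metric (isCompact_Icc (a := (0:ℝ)) (b := 1))
    (fun i => (D.hUopen i).preimage hγ)
    (fun x _ => Set.mem_iUnion.mpr (hcov (γ x)))
  obtain ⟨n, hn⟩ := exists_nat_gt (1/δ)
  have hnpos : 0 < n := by
    have h1δ : (0:ℝ) < 1/δ := by positivity
    exact_mod_cast Nat.cast_pos.mp (lt_trans h1δ hn)
  have hn' : (0:ℝ) < n := Nat.cast_pos.mpr hnpos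
  have hδn : 1/(n:ℝ) < δ := by
    rw [div_lt_iff₀ hn']
    rw [div_lt_iff₀ hδ] at hn
    linarith
  have hleb' : ∀ k : ℕ, k < n → ∃ i, Metric.ball ((k:ℝ)/n) δ ⊆ γ ⁻¹' (D.U i) := by
    intro k hk
    exact hLeb ((k:ℝ)/n) ⟨by positivity, by
      rw [div_le_one hn']; exact_mod_cast Nat.le_of_lt hk⟩
  classical
  let f : ℕ → I := fun k => if h : k < n then (hleb' k h).choose else iend
  let c : ℕ → I := fun k => if k = 0 then istart else if k ≤ n then f (k-1) else iend
  refine ⟨n, c, ⟨hnpos, fun k hk s hs1 hs2 => ?_, ?_, ?_⟩, rfl, ?_⟩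
  · have hck : c (k+1) = f k := by
      simp only [c, if_neg (Nat.succ_ne_zero k), if_pos (by omega : k + 1 ≤ n), Nat.add_sub_cancel]
    rw [hck]
    have hfk : f k = (hleb' k hk).choose := dif_pos hk
    rw [hfk]
    apply (hleb' k hk).choose_spec
    rw [Metric.mem_ball, Real.dist_eq, abs_sub_lt_iff]
    constructor
    · have : s ≤ ((k:ℝ)+1)/n := hs2
      have h2 : ((k:ℝ)+1)/n - (k:ℝ)/n = 1/n := by ring
      linarith
    · linarith [hδ, hs1]
  · simpa [c] using h0
  · simp only [c, if_neg (Nat.succ_ne_zero n), if_neg (by omega : ¬ n + 1 ≤ n)]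
    exact h1
  · simp only [c, if_neg (Nat.succ_ne_zero n), if_neg (by omega : ¬ n + 1 ≤ n)]

-- The monodromy function along the slices of a homotopy.
open scoped Classical in
noncomputable def Phi (D : CechData W G I) (K : ℝ × ℝ → W) (istart iend : I) (s : ℝ) : G :=
  if h : ∃ nc : ℕ × (ℕ → I), DevChain D (fun t => K (s,t)) nc.1 nc.2 ∧
      nc.2 0 = istart ∧ nc.2 (nc.1+1) = iend
  then dev D (fun t => K (s,t)) h.choose.1 h.choose.2 else 1

lemma Phi_spec {K : ℝ × ℝ → W} (hK : Continuous K) {istart iend : I} {s : ℝ}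
    {n : ℕ} {c : ℕ → I} (hch : DevChain D (fun t => K (s,t)) n c)
    (h0 : c 0 = istart) (h1 : c (n+1) = iend) :
    Phi D K istart iend s = dev D (fun t => K (s,t)) n c := by
  have hex : ∃ nc : ℕ × (ℕ → I), DevChain D (fun t => K (s,t)) nc.1 nc.2 ∧
      nc.2 0 = istart ∧ nc.2 (nc.1+1) = iend := ⟨(n, c), hch, h0, h1⟩
  unfold Phi
  rw [dif_pos hex]
  have hcont : ContinuousOn (fun t => K (s,t)) (Set.Icc (0:ℝ) 1) :=
    (hK.comp (continuous_const.prodMk continuous_id)).continuousOn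
  exact dev_welldef hcont hex.choose_spec.1 hch
    (hex.choose_spec.2.1.trans h0.symm) (hex.choose_spec.2.2.trans h1.symm)

lemma dev_homotopy {K : ℝ × ℝ → W} (hK : Continuous K)
    (hcov : ∀ w : W, ∃ i, w ∈ D.U i)
    (hx : ∀ s, K (s, 0) = K (0, 0)) (hy : ∀ s, K (s, 1) = K (0, 1))
    {istart iend : I} {n p : ℕ} {c e : ℕ → I}
    (hc : DevChain D (fun t => K (0, t)) n c) (hc0 : c 0 = istart) (hc1 : c (n+1) = iend)
    (he : DevChain D (fun t => K (1, t)) p e) (he0 : e 0 = istart) (he1 : e (p+1) = iend) :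
    dev D (fun t => K (0,t)) n c = dev D (fun t => K (1,t)) p e := by
  classical
  -- Lebesgue number for the square
  obtain ⟨δ, hδ, hLeb⟩ := lebesgue_number_lemma_of_metric
    ((isCompact_Icc (a := (0:ℝ)) (b := 1)).prod (isCompact_Icc (a := (0:ℝ)) (b := 1)))
    (fun i => (D.hUopen i).preimage hK)
    (fun z _ => Set.mem_iUnion.mpr (hcov (K z)))
  -- local constancy of Phi on [0,1]
  have key : ∀ s ∈ Set.Icc (0:ℝ) 1, ∀ s' ∈ Set.Icc (0:ℝ) 1, |s' - s| < δ →
      Phi D K istart iend s' = Phi D K istart iend s := by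
    intro s hs s' hs' hdist
    obtain ⟨m, hm⟩ := exists_nat_gt (1/δ)
    have hmpos : 0 < m := by
      have h1δ : (0:ℝ) < 1/δ := by positivity
      exact_mod_cast Nat.cast_pos.mp (lt_trans h1δ hm)
    have hm' : (0:ℝ) < m := Nat.cast_pos.mpr hmpos
    have hδm : 1/(m:ℝ) < δ := by
      rw [div_lt_iff₀ hm']
      rw [div_lt_iff₀ hδ] at hm
      linarith
    -- choose charts along the slice at s
    have hleb' : ∀ k : ℕ, k < m → ∃ i, Metric.ball (s, (k:ℝ)/m) δ ⊆ K ⁻¹' (D.U i) := by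
      intro k hk
      exact hLeb (s, (k:ℝ)/m) ⟨hs, ⟨by positivity, by
        rw [div_le_one hm']; exact_mod_cast Nat.le_of_lt hk⟩⟩
    let f : ℕ → I := fun k => if h : k < m then (hleb' k h).choose else iend
    let c' : ℕ → I := fun k => if k = 0 then istart else if k ≤ m then f (k-1) else iend
    -- basic facts about balls
    have hball : ∀ (σ : ℝ) (k : ℕ), |σ - s| < δ → k < m →
        ∀ t : ℝ, (k:ℝ)/m ≤ t → t ≤ ((k:ℝ)+1)/m → K (σ, t) ∈ D.U (f k) := by
      intro σ k hσ hk t ht1 ht2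
      have hfk : f k = (hleb' k hk).choose := dif_pos hk
      rw [hfk]
      apply (hleb' k hk).choose_spec
      rw [Metric.mem_ball, Prod.dist_eq, max_lt_iff]
      constructor
      · rwa [Real.dist_eq]
      · rw [Real.dist_eq, abs_sub_lt_iff]
        have h2 : ((k:ℝ)+1)/m - (k:ℝ)/m = 1/m := by ring
        constructor
        · linarith
        · linarith [hδ]
    -- c' is a chain for every σ with |σ - s| < δ
    have hchain : ∀ σ : ℝ, |σ - s| < δ → DevChain D (fun t => K (σ, t)) m c' := by
      intro σ hσ
      refine ⟨hmpos, fun k hk t ht1 ht2 => ?_, ?_, ?_⟩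
      · have hck : c' (k+1) = f k := by
          simp only [c', if_neg (Nat.succ_ne_zero k), if_pos (by omega : k + 1 ≤ m),
            Nat.add_sub_cancel]
        rw [hck]
        exact hball σ k hσ hk t ht1 ht2
      · show K (σ, 0) ∈ D.U (c' 0)
        have h00 : c' 0 = istart := rfl
        rw [hx σ, h00, ← hc0, ← hx 0]
        exact hc.2.2.1
      · show K (σ, 1) ∈ D.U (c' (m+1))
        simp only [c', if_neg (Nat.succ_ne_zero m), if_neg (by omega : ¬ m + 1 ≤ m)]
        rw [hy σ, ← hy 1, ← he1]
        exact he.2.2.2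
    have hchs : DevChain D (fun t => K (s, t)) m c' := hchain s (by simpa using hδ)
    have hchs' : DevChain D (fun t => K (s', t)) m c' := hchain s' hdist
    -- the two devs agree factor by factor
    have hdev : dev D (fun t => K (s', t)) m c' = dev D (fun t => K (s, t)) m c' := by
      apply dd_congr
      intro k hk
      rw [Fc, Fc]
      rcases Nat.eq_zero_or_pos k with rfl | hkpos
      · simp only [Nat.cast_zero, zero_div]
        rw [hx s', hx s]
      rcases eq_or_lt_of_le hk with rfl | hklt
      · have : ((k:ℝ))/(k:ℝ) = 1 := div_self (by positivity)
        rw [this, hy s', hy s]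
      -- interior node : use local constancy of g
      · have hk1m : k - 1 < m := by omega
        have habs : ∀ σ ∈ Set.Icc (min s s') (max s s'), |σ - s| < δ := by
          intro σ hσ
          rw [abs_sub_lt_iff] at hdist ⊢
          rcases le_total s s' with h | h
          · rw [min_eq_left h, max_eq_right h] at hσ
            constructor
            · linarith [hσ.2, hdist.1]
            · linarith [hσ.1, hδ]
          · rw [min_eq_right h, max_eq_left h] at hσ
            constructor
            · linarith [hσ.2, hδ]
            · linarith [hσ.1, hdist.2]
        set t0 := ((k:ℝ))/m with ht0
        have hsub : (fun σ => K (σ, t0)) '' Set.Icc (min s s') (max s s') ⊆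
            D.U (c' k) ∩ D.U (c' (k+1)) := by
          rintro - ⟨σ, hσ, rfl⟩
          have hσδ := habs σ hσ
          constructor
          · have hck : c' k = f (k-1) := by
              simp only [c', if_neg (by omega : ¬ k = 0), if_pos (by omega : k ≤ m)]
            rw [hck]
            refine hball σ (k-1) hσδ hk1m t0 ?_ ?_
            · rw [ht0]
              gcongr
              · exact_mod_cast Nat.sub_le k 1
            · rw [ht0]
              have : ((k-1:ℕ):ℝ) = (k:ℝ) - 1 := by
                have : (1:ℕ) ≤ k := hkpos
                push_cast [this]
                ring
              rw [this]
              gcongr <;> linarith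
          · have hck : c' (k+1) = f k := by
              simp only [c', if_neg (Nat.succ_ne_zero k), if_pos (by omega : k + 1 ≤ m),
                Nat.add_sub_cancel]
            rw [hck]
            refine hball σ k hσδ (by omega) t0 le_rfl ?_
            rw [ht0]
            gcongr <;> linarith
        have hpre : IsPreconnected ((fun σ => K (σ, t0)) '' Set.Icc (min s s') (max s s')) :=
          isPreconnected_Icc.image _
            (hK.comp (continuous_id.prodMk continuous_const)).continuousOn
        exact D.g_const hsub hpre
          ⟨s', ⟨min_le_right _ _, le_max_right _ _⟩, rfl⟩
          ⟨s, ⟨min_le_left _ _, le_max_left _ _⟩, rfl⟩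
    -- conclude using the characterization of Phi
    have hc'0 : c' 0 = istart := rfl
    have hc't : c' (m+1) = iend := by
      simp only [c', if_neg (Nat.succ_ne_zero m), if_neg (by omega : ¬ m + 1 ≤ m)]
    rw [Phi_spec hK hchs' hc'0 hc't, Phi_spec hK hchs hc'0 hc't, hdev]
  -- Phi is constant on [0,1]
  have hψ : ∀ a b : ℝ, a ∈ Set.Icc (0:ℝ) 1 → b ∈ Set.Icc (0:ℝ) 1 →
      Phi D K istart iend a = Phi D K istart iend b := by
    have hlc : IsLocallyConstant (fun u : (Set.Icc (0:ℝ) 1) => Phi D K istart iend u.1) := by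
      rw [IsLocallyConstant.iff_exists_open]
      rintro ⟨u, hu⟩
      refine ⟨Subtype.val ⁻¹' Metric.ball u δ,
        Metric.isOpen_ball.preimage continuous_subtype_val, ?_, ?_⟩
      · simp [Metric.mem_ball, hδ]
      · rintro ⟨v, hv⟩ hvball
        exact key u hu v hv (by simpa [Metric.mem_ball, Real.dist_eq] using hvball)
    haveI : PreconnectedSpace (Set.Icc (0:ℝ) 1) := Subtype.preconnectedSpace isPreconnected_Icc
    exact fun a b ha hb => hlc.apply_eq_of_preconnectedSpace ⟨a, ha⟩ ⟨b, hb⟩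
  calc dev D (fun t => K (0,t)) n c
      = Phi D K istart iend 0 := (Phi_spec hK hc hc0 hc1).symm
    _ = Phi D K istart iend 1 := hψ 0 1 ⟨le_refl _, zero_le_one⟩ ⟨zero_le_one, le_refl _⟩
    _ = dev D (fun t => K (1,t)) p e := Phi_spec hK he he0 he1

end Homotopy
section Charted

lemma exists_pathConnected_nbhd {n : ℕ} {W : Type} [TopologicalSpace W]
    [ChartedSpace (EuclideanSpace ℝ (Fin n)) W]
    (x : W) (O : Set W) (hO : IsOpen O) (hxO : x ∈ O) :
    ∃ V : Set W, IsOpen V ∧ x ∈ V ∧ V ⊆ O ∧ ∀ y ∈ V, JoinedIn V x y := by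
  set e := chartAt (EuclideanSpace ℝ (Fin n)) x with he
  have hsrc : x ∈ e.source := mem_chart_source _ x
  have hO' : IsOpen (O ∩ e.source) := hO.inter e.open_source
  have himg : IsOpen (e '' (O ∩ e.source)) :=
    e.isOpen_image_of_subset_source hO' Set.inter_subset_right
  have hex : e x ∈ e '' (O ∩ e.source) := ⟨x, ⟨hxO, hsrc⟩, rfl⟩
  obtain ⟨r, hr, hball⟩ := Metric.isOpen_iff.mp himg (e x) hex
  have hballtgt : Metric.ball (e x) r ⊆ e.target := by
    intro z hz
    obtain ⟨w, hw, rfl⟩ := hball hz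
    exact e.map_source hw.2
  refine ⟨e.symm '' Metric.ball (e x) r, ?_, ?_, ?_, ?_⟩
  · have heq : e.symm '' Metric.ball (e x) r = e.source ∩ e ⁻¹' Metric.ball (e x) r := by
      ext v
      constructor
      · rintro ⟨z, hz, rfl⟩
        refine ⟨e.map_target (hballtgt hz), ?_⟩
        show e (e.symm z) ∈ Metric.ball (e x) r
        rwa [e.right_inv (hballtgt hz)]
      · rintro ⟨hv, hvball⟩
        exact ⟨e v, hvball, e.left_inv hv⟩
    rw [heq]
    exact e.continuousOn.isOpen_inter_preimage e.open_source Metric.isOpen_ball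
  · exact ⟨e x, Metric.mem_ball_self hr, e.left_inv hsrc⟩
  · rintro - ⟨z, hz, rfl⟩
    obtain ⟨w, hw, rfl⟩ := hball hz
    rw [e.left_inv hw.2]
    exact hw.1
  · have hpc : IsPathConnected (Metric.ball (e x) r) :=
      (convex_ball (e x) r).isPathConnected (Metric.nonempty_ball.mpr hr)
    have hpc2 : IsPathConnected (e.symm '' Metric.ball (e x) r) :=
      hpc.image' (e.continuousOn_symm.mono hballtgt)
    intro y hy
    exact hpc2.joinedIn _ ⟨e x, Metric.mem_ball_self hr, e.left_inv hsrc⟩ _ hy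

end Charted
section TransExtend

variable {X : Type} [TopologicalSpace X] {a b c : X}

lemma trans_extend_left (P : Path a b) (Q : Path b c) {s : ℝ} (h : s ≤ 1/2) :
    (P.trans Q).extend s = P.extend (2*s) := by
  rcases le_or_gt s 0 with h0 | h0
  · rw [Path.extend_of_le_zero _ h0, Path.extend_of_le_zero _ (by linarith)]
  · have hs1 : s ∈ Set.Icc (0:ℝ) 1 := ⟨h0.le, by linarith⟩
    rw [Path.extend_apply _ hs1, Path.trans_apply]
    rw [dif_pos h]
    exact (Path.extend_apply _ ⟨by linarith, by linarith⟩).symm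

lemma trans_extend_right (P : Path a b) (Q : Path b c) {s : ℝ} (h : 1/2 ≤ s) :
    (P.trans Q).extend s = Q.extend (2*s - 1) := by
  rcases lt_or_ge 1 s with h1 | h1
  · rw [Path.extend_of_one_le _ h1.le, Path.extend_of_one_le _ (by linarith)]
  · have hs1 : s ∈ Set.Icc (0:ℝ) 1 := ⟨by linarith, h1⟩
    rw [Path.extend_apply _ hs1, Path.trans_apply]
    rcases eq_or_lt_of_le h with heq | hlt
    · rw [dif_pos heq.ge]
      have h2s : (⟨2*s, by constructor <;> [linarith; linarith]⟩ :
          unitInterval) = 1 := by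
        ext
        simp only [Set.Icc.coe_one]
        linarith [heq]
      rw [h2s, Path.target, show 2*s - 1 = 0 by linarith [heq], Path.extend_zero]
    · rw [dif_neg (not_le.mpr hlt)]
      exact (Path.extend_apply _ ⟨by linarith, by linarith⟩).symm

end TransExtend

section Section

variable {W : Type} [TopologicalSpace W] {G : Type} [Group G] {I : Type}

open scoped Classical in
noncomputable def secF (D : CechData W G I) (x₀ : W) (istar : I) (i : I) (x : W) : G :=
  if h : ∃ pnc : Path x₀ x × ℕ × (ℕ → I),
      DevChain D pnc.1.extend pnc.2.1 pnc.2.2 ∧ pnc.2.2 0 = istar ∧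
      pnc.2.2 (pnc.2.1 + 1) = i
  then dev D h.choose.1.extend h.choose.2.1 h.choose.2.2 else 1

variable {D : CechData W G I} {x₀ : W} {istar : I}

lemma secF_spec (hsc : ∀ {v w : W} (p q : Path v w), Path.Homotopic p q)
    (hcov : ∀ w : W, ∃ i, w ∈ D.U i)
    {i : I} {x : W} (P : Path x₀ x) {nn : ℕ} {c : ℕ → I}
    (hch : DevChain D P.extend nn c) (h0 : c 0 = istar) (h1 : c (nn+1) = i) :
    secF D x₀ istar i x = dev D P.extend nn c := by
  have hex : ∃ pnc : Path x₀ x × ℕ × (ℕ → I),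
      DevChain D pnc.1.extend pnc.2.1 pnc.2.2 ∧ pnc.2.2 0 = istar ∧
      pnc.2.2 (pnc.2.1 + 1) = i := ⟨(P, nn, c), hch, h0, h1⟩
  unfold secF
  rw [dif_pos hex]
  obtain ⟨hch', h0', h1'⟩ := hex.choose_spec
  obtain ⟨Γ⟩ := hsc hex.choose.1 P
  set K : ℝ × ℝ → W := fun z =>
    Γ (Set.projIcc 0 1 zero_le_one z.1, Set.projIcc 0 1 zero_le_one z.2) with hKdef
  have hK : Continuous K := Γ.continuous.comp
    ((continuous_projIcc.comp continuous_fst).prodMk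
      (continuous_projIcc.comp continuous_snd))
  have hp0 : Set.projIcc (0:ℝ) 1 zero_le_one 0 = 0 := by
    rw [Set.projIcc_left]; rfl
  have hp1 : Set.projIcc (0:ℝ) 1 zero_le_one 1 = 1 := by
    rw [Set.projIcc_right]; rfl
  have hK0 : (fun t => K (0, t)) = (hex.choose.1).extend := by
    funext t
    show Γ (Set.projIcc 0 1 zero_le_one 0, Set.projIcc 0 1 zero_le_one t) = _
    rw [hp0]
    exact Γ.apply_zero _
  have hK1 : (fun t => K (1, t)) = P.extend := by
    funext t
    show Γ (Set.projIcc 0 1 zero_le_one 1, Set.projIcc 0 1 zero_le_one t) = _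
    rw [hp1]
    exact Γ.apply_one _
  have hx0 : ∀ s, K (s, 0) = K (0, 0) := by
    intro s
    show Γ (_, Set.projIcc 0 1 zero_le_one 0) = Γ (_, Set.projIcc 0 1 zero_le_one 0)
    rw [hp0, Γ.source, Γ.source]
  have hy0 : ∀ s, K (s, 1) = K (0, 1) := by
    intro s
    show Γ (_, Set.projIcc 0 1 zero_le_one 1) = Γ (_, Set.projIcc 0 1 zero_le_one 1)
    rw [hp1, Γ.target, Γ.target]
  have hc1' : DevChain D (fun t => K (0,t)) hex.choose.2.1 hex.choose.2.2 := by
    rw [hK0]; exact hch'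
  have hc2' : DevChain D (fun t => K (1,t)) nn c := by
    rw [hK1]; exact hch
  have hmain := dev_homotopy hK hcov hx0 hy0 hc1' h0' h1' hc2' h0 h1
  rw [hK0, hK1] at hmain
  exact hmain

end Section
section Section2

variable {W : Type} [TopologicalSpace W] [PathConnectedSpace W]
  {G : Type} [Group G] {I : Type}
variable {D : CechData W G I} {x₀ : W} {istar : I}

lemma secF_overlap (hsc : ∀ {v w : W} (p q : Path v w), Path.Homotopic p q)
    (hcov : ∀ w : W, ∃ i, w ∈ D.U i) (histar : x₀ ∈ D.U istar)
    {i j : I} {x : W} (hx : x ∈ D.U i ∩ D.U j) :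
    secF D x₀ istar j x = D.g i j x * secF D x₀ istar i x := by
  classical
  set P : Path x₀ x := PathConnectedSpace.somePath x₀ x with hP
  obtain ⟨nn, c, hch, h0, h1⟩ := chain_exists P.continuous_extend hcov istar i
    (by rw [Path.extend_zero]; exact histar) (by rw [Path.extend_one]; exact hx.1)
  have hn := hch.1
  have hsi := secF_spec hsc hcov P hch h0 h1
  set c' := Function.update c (nn+1) j with hc'
  have hch' : DevChain D P.extend nn c' := by
    obtain ⟨hn, hseg, hg0, hg1⟩ := hch
    refine ⟨hn, fun k hk s hs1 hs2 => ?_, ?_, ?_⟩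
    · rw [hc', Function.update_of_ne (by omega)]
      exact hseg k hk s hs1 hs2
    · rw [hc', Function.update_of_ne (by omega)]
      exact hg0
    · rw [hc', Function.update_self, Path.extend_one]
      exact hx.2
  have hsj := secF_spec hsc hcov P hch'
    (show c' 0 = istar by rw [hc', Function.update_of_ne (by omega)]; exact h0)
    (show c' (nn+1) = j by rw [hc', Function.update_self])
  rw [hsi, hsj]
  obtain ⟨m, rfl⟩ : ∃ m, nn = m + 1 := ⟨nn - 1, by omega⟩
  have hm1 : ((m+1:ℕ):ℝ) ≠ 0 := Nat.cast_ne_zero.mpr (Nat.succ_ne_zero m)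
  have hnode : P.extend (((m+1:ℕ):ℝ)/((m+1:ℕ):ℝ)) = x := by
    rw [div_self hm1, Path.extend_one]
  have hxc : x ∈ D.U (c (m+1)) := by
    have := node_mem_left hch (le_refl (m+1))
    rwa [hnode] at this
  have hFm : ∀ k ≤ m, Fc D P.extend (m+1) c' k = Fc D P.extend (m+1) c k := by
    intro k hk
    rw [Fc, Fc, hc', Function.update_of_ne (by omega), Function.update_of_ne (by omega)]
  have hFtop : Fc D P.extend (m+1) c' (m+1) =
      D.g i j x * Fc D P.extend (m+1) c (m+1) := by
    rw [Fc, Fc, hc', Function.update_of_ne (by omega), Function.update_self, hnode, h1]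
    exact D.g_chg ⟨⟨hxc, hx.1⟩, hx.2⟩
  show dd (Fc D P.extend (m+1) c') (m+1) = _ * dd (Fc D P.extend (m+1) c) (m+1)
  rw [dd, dd, hFtop, dd_congr (fun k hk => hFm k hk), mul_assoc]

lemma secF_locconst (hsc : ∀ {v w : W} (p q : Path v w), Path.Homotopic p q)
    (hlpc : ∀ (x : W) (O : Set W), IsOpen O → x ∈ O →
      ∃ V : Set W, IsOpen V ∧ x ∈ V ∧ V ⊆ O ∧ ∀ y ∈ V, JoinedIn V x y)
    (hcov : ∀ w : W, ∃ i, w ∈ D.U i) (histar : x₀ ∈ D.U istar)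
    {i : I} {x : W} (hx : x ∈ D.U i) :
    ∃ V : Set W, IsOpen V ∧ x ∈ V ∧ V ⊆ D.U i ∧
      ∀ y ∈ V, secF D x₀ istar i y = secF D x₀ istar i x := by
  classical
  obtain ⟨V, hVopen, hxV, hVsub, hVpath⟩ := hlpc x (D.U i) (D.hUopen i) hx
  refine ⟨V, hVopen, hxV, hVsub, fun y hy => ?_⟩
  set P : Path x₀ x := PathConnectedSpace.somePath x₀ x with hP
  obtain ⟨nn, c, hch, h0, h1⟩ := chain_exists P.continuous_extend hcov istar i
    (by rw [Path.extend_zero]; exact histar) (by rw [Path.extend_one]; exact hx)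
  have hn := hch.1
  have hnn' : (0:ℝ) < nn := Nat.cast_pos.mpr hn
  obtain ⟨Q, hQ⟩ := hVpath y hy
  set PQ := P.trans Q with hPQ
  set c'' : ℕ → I := fun k => if k ≤ nn then c k else i with hc''
  have hQext : ∀ r : ℝ, Q.extend r ∈ V := fun r => hQ _
  have h2nn : ((2*nn : ℕ):ℝ) = 2*(nn:ℝ) := by push_cast; ring
  have h2nnpos : (0:ℝ) < ((2*nn:ℕ):ℝ) := by rw [h2nn]; positivity
  -- the concatenated chain
  have hch'' : DevChain D PQ.extend (2*nn) c'' := by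
    refine ⟨by omega, fun k hk s hs1 hs2 => ?_, ?_, ?_⟩
    · rcases lt_or_ge k nn with hkn | hkn
      · have he : c'' (k+1) = c (k+1) := if_pos (by omega)
        rw [he]
        have hs12 : s ≤ 1/2 := by
          refine le_trans hs2 ?_
          rw [h2nn, div_le_div_iff₀ (by positivity) (by norm_num)]
          have : ((k:ℝ)+1) ≤ (nn:ℝ) := by exact_mod_cast hkn
          linarith
        rw [trans_extend_left P Q hs12]
        refine hch.2.1 k hkn (2*s) ?_ ?_
        · rw [div_le_iff₀ hnn']
          rw [div_le_iff₀ h2nnpos] at hs1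
          rw [h2nn] at hs1
          linarith
        · rw [le_div_iff₀ hnn']
          rw [le_div_iff₀ h2nnpos] at hs2
          rw [h2nn] at hs2
          linarith
      · have he : c'' (k+1) = i := if_neg (by omega)
        rw [he]
        have hs12 : 1/2 ≤ s := by
          refine le_trans ?_ hs1
          rw [h2nn, div_le_div_iff₀ (by norm_num) (by positivity)]
          have : (nn:ℝ) ≤ (k:ℝ) := by exact_mod_cast hkn
          linarith
        rw [trans_extend_right P Q hs12]
        exact hVsub (hQext _)
    · rw [Path.extend_zero, show c'' 0 = c 0 from if_pos (by omega)]
      have := hch.2.2.1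
      rwa [Path.extend_zero] at this
    · rw [Path.extend_one, show c'' (2*nn+1) = i from if_neg (by omega)]
      exact hVsub hy
  have hsy := secF_spec hsc hcov PQ hch''
    (show c'' 0 = istar by rw [show c'' 0 = c 0 from if_pos (by omega)]; exact h0)
    (show c'' (2*nn+1) = i from if_neg (by omega))
  have hsx := secF_spec hsc hcov P hch h0 h1
  rw [hsy, hsx]
  -- the two devs agree
  have hF : ∀ k ≤ nn, Fc D PQ.extend (2*nn) c'' k = Fc D P.extend nn c k := by
    intro k hk
    have e1 : c'' k = c k := if_pos hk
    have e2 : c'' (k+1) = c (k+1) := by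
      by_cases hkk : k + 1 ≤ nn
      · exact if_pos hkk
      · rw [hc'']
        simp only [if_neg hkk]
        rw [show k = nn by omega, h1]
    have hpt : PQ.extend ((k:ℝ)/((2*nn:ℕ):ℝ)) = P.extend ((k:ℝ)/(nn:ℝ)) := by
      have hs12 : (k:ℝ)/((2*nn:ℕ):ℝ) ≤ 1/2 := by
        rw [h2nn, div_le_div_iff₀ (by positivity) (by norm_num)]
        have : (k:ℝ) ≤ (nn:ℝ) := by exact_mod_cast hk
        linarith
      rw [trans_extend_left P Q hs12]
      congr 1
      rw [h2nn]
      field_simp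
    rw [Fc, Fc, e1, e2, hpt]
  have hone : ∀ r, 0 < r → r ≤ nn → Fc D PQ.extend (2*nn) c'' (nn + r) = 1 := by
    intro r hr hrnn
    have e1 : c'' (nn + r) = i := if_neg (by omega)
    have e2 : c'' (nn + r + 1) = i := if_neg (by omega)
    have hs12 : 1/2 ≤ ((nn + r:ℕ):ℝ)/((2*nn:ℕ):ℝ) := by
      rw [h2nn, div_le_div_iff₀ (by norm_num) (by positivity)]
      have : (0:ℝ) ≤ (r:ℝ) := by positivity
      push_cast
      linarith
    have hmem : PQ.extend (((nn + r:ℕ):ℝ)/((2*nn:ℕ):ℝ)) ∈ D.U i := by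
      rw [trans_extend_right P Q hs12]
      exact hVsub (hQext _)
    rw [Fc, e1, e2]
    exact D.hgid _ _ hmem
  show dd (Fc D PQ.extend (2*nn) c'') (2*nn) = dd (Fc D P.extend nn c) nn
  have hsplit : dd (Fc D PQ.extend (2*nn) c'') (nn + nn) =
      Fc D PQ.extend (2*nn) c'' (nn + nn) * dd (Fc D PQ.extend (2*nn) c'') nn :=
    dd_block _ nn nn hn (fun r hr hrm => hone r hr hrm.le)
  calc dd (Fc D PQ.extend (2*nn) c'') (2*nn)
      = dd (Fc D PQ.extend (2*nn) c'') (nn + nn) := congrArg _ (two_mul nn)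
    _ = Fc D PQ.extend (2*nn) c'' (nn + nn) * dd (Fc D PQ.extend (2*nn) c'') nn := hsplit
    _ = 1 * dd (Fc D PQ.extend (2*nn) c'') nn := by rw [hone nn hn le_rfl]
    _ = dd (Fc D PQ.extend (2*nn) c'') nn := one_mul _
    _ = dd (Fc D P.extend nn c) nn := dd_congr (fun k hk => hF k hk)

end Section2
section Main

theorem cech_coboundary_aux {W : Type} [TopologicalSpace W] [PathConnectedSpace W]
    {G : Type} [Group G] {I : Type}
    (hsc : ∀ {v w : W} (p q : Path v w), Path.Homotopic p q)
    (hlpc : ∀ (x : W) (O : Set W), IsOpen O → x ∈ O →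
      ∃ V : Set W, IsOpen V ∧ x ∈ V ∧ V ⊆ O ∧ ∀ y ∈ V, JoinedIn V x y)
    (D : CechData W G I) (hcov : ∀ w : W, ∃ i, w ∈ D.U i) :
    ∃ h : I → W → G, (∀ i, IsLocallyConstant (fun x : ↥(D.U i) => h i x)) ∧
      (∀ i j, ∀ x ∈ D.U i ∩ D.U j, D.g i j x = (h j x)⁻¹ * h i x) := by
  classical
  obtain ⟨x₀⟩ := (inferInstance : PathConnectedSpace W).nonempty
  obtain ⟨istar, histar⟩ := hcov x₀
  refine ⟨fun i x => (secF D x₀ istar i x)⁻¹, ?_, ?_⟩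
  · intro i
    rw [IsLocallyConstant.iff_exists_open]
    rintro ⟨x, hx⟩
    obtain ⟨V, hVo, hxV, hVsub, hVconst⟩ := secF_locconst hsc hlpc hcov histar hx
    refine ⟨Subtype.val ⁻¹' V, hVo.preimage continuous_subtype_val, hxV, ?_⟩
    rintro ⟨z, hz⟩ hzV
    simp only
    rw [hVconst z hzV]
  · intro i j x hx
    have hov := secF_overlap hsc hcov histar hx
    rw [inv_inv, hov, mul_inv_cancel_right]

end Main

/-- On a simply connected topological manifold `W`, every locally
constant `G`-valued Čech 1-cocycle on an open cover becomes a coboundary after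
passing to a refinement. -/
theorem locallyConstant_cech_one_cocycle_is_coboundary
    {n : ℕ} (W : Type) [TopologicalSpace W] [T2Space W]
    [SecondCountableTopology W] [ChartedSpace (EuclideanSpace ℝ (Fin n)) W]
    [SimplyConnectedSpace W]
    (G : Type) [Group G]
    {I : Type} (U : I → Set W) (hUopen : ∀ i, IsOpen (U i))
    (hUcover : ⋃ i, U i = Set.univ)
    (g : I → I → W → G)
    (hgloc : ∀ i j, (U i ∩ U j).Nonempty →
      IsLocallyConstant (fun x : ↥(U i ∩ U j) => g i j x))
    (hgid : ∀ i, ∀ x ∈ U i, g i i x = 1)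
    (hgcocycle : ∀ i j k, ∀ x ∈ U i ∩ U j ∩ U k,
      g k i x * g j k x * g i j x = 1) :
    ∃ (A : Type) (V : A → Set W) (τ : A → I) (h : A → W → G),
      (∀ a, IsOpen (V a)) ∧
      (⋃ a, V a = Set.univ) ∧
      (∀ a, V a ⊆ U (τ a)) ∧
      (∀ a, IsLocallyConstant (fun x : ↥(V a) => h a x)) ∧
      (∀ a b, (V a ∩ V b).Nonempty →
        ∀ x ∈ V a ∩ V b, g (τ a) (τ b) x = (h b x)⁻¹ * h a x) := by
  classical
  set D : CechData W G I := ⟨U, g, hUopen, hgloc, hgid, hgcocycle⟩ with hD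
  have hcov : ∀ w : W, ∃ i, w ∈ D.U i := by
    intro w
    have : w ∈ ⋃ i, U i := hUcover ▸ Set.mem_univ w
    exact Set.mem_iUnion.mp this
  have hsc : ∀ {v w : W} (p q : Path v w), Path.Homotopic p q :=
    fun p q => SimplyConnectedSpace.paths_homotopic p q
  have hlpc : ∀ (x : W) (O : Set W), IsOpen O → x ∈ O →
      ∃ V : Set W, IsOpen V ∧ x ∈ V ∧ V ⊆ O ∧ ∀ y ∈ V, JoinedIn V x y :=
    fun x O hO hxO => exists_pathConnected_nbhd (n := n) x O hO hxO
  obtain ⟨h, hloc, hco⟩ := cech_coboundary_aux hsc hlpc D hcov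
  exact ⟨I, U, id, h, hUopen, hUcover, fun a => le_refl _, hloc,
    fun a b _ x hx => hco a b x hx⟩
end dd
end

section
/- Let M be a finite-dimensional smooth (C^∞) manifold without boundary, Hausdorff and second countable, let π : M → ℝ^m be a smooth proper map (preimages of compact sets are compact), let v ∈ ℝ^m, and let χ be a smooth vector field on M satisfying dπ_p(χ(p)) = v for every p ∈ M. Then the flow of χ is complete: for every x ∈ M there exists a curve γ : ℝ → M with γ(0) = x which is an integral curve of χ on all of ℝ (i.e., γ'(t) = χ(γ(t)) for all t ∈ ℝ). -/
open scoped Manifold Topology NNReal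
open Function Set Metric

section PL
variable {E : Type*} [NormedAddCommGroup E] [NormedSpace ℝ E] [CompleteSpace E]

/-- Uniform-time Picard–Lindelöf: there is a uniform existence time for all initial
conditions in a small closed ball around `x₀`, with solutions staying in a prescribed
neighbourhood `W` of `x₀`. -/
lemma exists_unif_time_solution {g : E → E} {x₀ : E} (hg : ContDiffAt ℝ 1 g x₀)
    {W : Set E} (hW : W ∈ 𝓝 x₀) :
    ∃ ε > (0:ℝ), ∃ r > (0:ℝ), ∀ z ∈ closedBall x₀ r, ∃ f : ℝ → E, f 0 = z ∧
      (∀ t : ℝ, f t ∈ W) ∧ ∀ t ∈ Ioo (-ε) ε, HasDerivAt f (g (f t)) t := by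
  obtain ⟨L, s, hs, hlip⟩ := hg.exists_lipschitzOnWith
  obtain ⟨R₁, hR₁ : 0 < R₁, hball⟩ := Metric.mem_nhds_iff.mp hs
  obtain ⟨R₂, hR₂ : 0 < R₂, hbdd⟩ := Metric.continuousAt_iff.mp hg.continuousAt.norm 1 zero_lt_one
  obtain ⟨R₃, hR₃ : 0 < R₃, hWball⟩ := Metric.mem_nhds_iff.mp hW
  have hbdd' : ∀ x ∈ Metric.ball x₀ R₂, ‖g x‖ ≤ 1 + ‖g x₀‖ := fun _ hx =>
    sub_le_iff_le_add.mp <| le_of_lt <| lt_of_abs_lt <| Real.dist_eq _ _ ▸ hbdd hx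
  set Rm := min R₁ (min R₂ R₃) with hRm
  have hRm0 : 0 < Rm := lt_min hR₁ (lt_min hR₂ hR₃)
  set r : ℝ := Rm / 4 with hr
  have hr0 : 0 < r := by positivity
  set C : ℝ := 1 + ‖g x₀‖ with hC
  have hC0 : 0 < C := by positivity
  set ε : ℝ := r / C with hε
  have hε0 : 0 < ε := by positivity
  refine ⟨ε, hε0, r, hr0, fun z hz => ?_⟩
  have hsub : closedBall x₀ (2 * r) ⊆ ball x₀ Rm :=
    closedBall_subset_ball (by rw [hr]; linarith)
  set a' : ℝ≥0 := ⟨2 * r, by positivity⟩ with ha'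
  set r' : ℝ≥0 := ⟨r, hr0.le⟩ with hr'
  set C' : ℝ≥0 := ⟨C, hC0.le⟩ with hC'
  have ht0 : (0:ℝ) ∈ Icc (-ε) ε := ⟨by linarith, hε0.le⟩
  have hpl : IsPicardLindelof (fun _ : ℝ => g) (tmin := -ε) (tmax := ε) ⟨0, ht0⟩ x₀ a' r' C' L :=
    IsPicardLindelof.of_time_independent
      (fun x hx => by
        show ‖g x‖ ≤ C
        exact hbdd' x <| mem_of_mem_of_subset (hsub hx) <|
          ball_subset_ball <| (min_le_right _ _).trans (min_le_left _ _))
      (hlip.mono <| hsub.trans <| (ball_subset_ball (min_le_left _ _)).trans hball)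
      (by
        show C * max (ε - 0) (0 - -ε) ≤ 2 * r - r
        rw [sub_zero, zero_sub, neg_neg, max_self, hε, mul_div_cancel₀ _ hC0.ne']; linarith)
  have hz' : z ∈ closedBall x₀ (r' : ℝ) := hz
  obtain ⟨α, hα⟩ := ODE.FunSpace.exists_isFixedPt_next hpl hz'
  refine ⟨α.compProj, ?_, fun t => ?_, fun t ht => ?_⟩
  · show α.compProj ((⟨0, ht0⟩ : Icc (-ε) ε) : ℝ) = z
    rw [ODE.FunSpace.compProj_val, ← hα, ODE.FunSpace.next_apply₀]
  · exact hWball <| mem_of_mem_of_subset (hsub (α.compProj_mem_closedBall hpl.mul_max_le)) <|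
      ball_subset_ball <| (min_le_right _ _).trans (min_le_right _ _)
  · have ht' : t ∈ Icc (-ε) ε := Ioo_subset_Icc_self ht
    have hd : HasDerivWithinAt α.compProj (g (α.compProj t)) (Icc (-ε) ε) t := by
      apply ODE.hasDerivWithinAt_picard_Icc (⟨0, ht0⟩ : Icc (-ε) ε).2 hpl.continuousOn_uncurry
        α.continuous_compProj.continuousOn (fun _ _ ↦ α.compProj_mem_closedBall hpl.mul_max_le)
        z ht' |>.congr_of_mem _ ht'
      intro t' ht''
      nth_rw 1 [← hα]
      rw [ODE.FunSpace.compProj_of_mem ht'', ODE.FunSpace.next_apply]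
    exact hd.hasDerivAt (Icc_mem_nhds ht.1 ht.2)

end PL

section Mfd

variable
  {E : Type*} [NormedAddCommGroup E] [NormedSpace ℝ E] [CompleteSpace E]
  {H : Type*} [TopologicalSpace H] {I : ModelWithCorners ℝ E H}
  {M : Type*} [TopologicalSpace M] [ChartedSpace H M] [IsManifold I 1 M]
  {v : (x : M) → TangentSpace I x}

/-- Uniform-time local existence of integral curves in a neighbourhood of a point. -/
theorem exists_nhds_isIntegralCurveOn
    (hv : ContMDiff I I.tangent 1 (fun x ↦ (⟨x, v x⟩ : TangentBundle I M)))
    (x₀ : M) (hx : I.IsInteriorPoint x₀) :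
    ∃ ε > (0:ℝ), ∃ U ∈ 𝓝 x₀, ∀ z ∈ U, ∃ γ : ℝ → M, γ 0 = z ∧
      IsMIntegralCurveOn γ v (Ioo (-ε) ε) := by
  have hv' := hv x₀
  rw [contMDiffAt_iff] at hv'
  obtain ⟨_, hv'⟩ := hv'
  have hW : interior (extChartAt I x₀).target ∈ 𝓝 (extChartAt I x₀ x₀) :=
    isOpen_interior.mem_nhds ((I.isInteriorPoint_iff).mp hx)
  obtain ⟨ε, hε, r, hr, hsol⟩ := exists_unif_time_solution
    ((hv'.contDiffAt (range_mem_nhds_isInteriorPoint hx)).snd) hW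
  refine ⟨ε, hε, (extChartAt I x₀).source ∩ extChartAt I x₀ ⁻¹' ball (extChartAt I x₀ x₀) r,
    Filter.inter_mem (extChartAt_source_mem_nhds x₀)
      ((continuousAt_extChartAt x₀).preimage_mem_nhds (ball_mem_nhds _ hr)), fun z hz => ?_⟩
  obtain ⟨f, hf1, hfW, hf2⟩ := hsol (extChartAt I x₀ z) (ball_subset_closedBall hz.2)
  refine ⟨(extChartAt I x₀).symm ∘ f,
    by rw [Function.comp_apply, hf1, PartialEquiv.left_inv _ hz.1], ?_⟩
  intros t ht
  -- collect useful terms in convenient forms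
  let xₜ : M := (extChartAt I x₀).symm (f t) -- `xₜ := γ t`
  have h : HasDerivAt f (x := t) <| fderivWithin ℝ (extChartAt I x₀ ∘ (extChartAt I xₜ).symm)
    (range I) (extChartAt I xₜ xₜ) (v xₜ) := hf2 t ht
  rw [← tangentCoordChange_def] at h
  have hf3 : f t ∈ interior (extChartAt I x₀).target := hfW t
  have hf3' := mem_of_mem_of_subset hf3 interior_subset
  have hft1 := mem_preimage.mp <|
    mem_of_mem_of_subset hf3' (extChartAt I x₀).target_subset_preimage_source
  have hft2 := mem_extChartAt_source (I := I) xₜ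
  -- express the derivative of the integral curve in the local chart
  apply HasMFDerivAt.hasMFDerivWithinAt
  refine ⟨(continuousAt_extChartAt_symm'' hf3').comp h.continuousAt, ?_⟩
  simp only [mfld_simps, hasFDerivWithinAt_univ]
  change HasFDerivWithinAt ((extChartAt I xₜ ∘ (extChartAt I x₀).symm) ∘ f)
    ((1 : ℝ →L[ℝ] ℝ).smulRight (v xₜ)) univ t
  rw [hasFDerivWithinAt_univ]
  change HasDerivAt ((extChartAt I xₜ ∘ (extChartAt I x₀).symm) ∘ f) (v xₜ) t
  have hcc : tangentCoordChange I x₀ xₜ xₜ (tangentCoordChange I xₜ x₀ xₜ (v xₜ)) = v xₜ :=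
    (tangentCoordChange_comp (x := x₀) ⟨⟨hft2, hft1⟩, hft2⟩).trans
      (tangentCoordChange_self (I := I) (x := xₜ) (z := xₜ) (v := v xₜ) hft2)
  refine HasDerivAt.congr_deriv ?_ hcc
  apply HasFDerivAt.comp_hasDerivAt _ _ h
  apply HasFDerivWithinAt.hasFDerivAt (s := range I) _ <|
    mem_nhds_iff.mpr ⟨interior (extChartAt I x₀).target,
      subset_trans interior_subset (extChartAt_target_subset_range ..),
      isOpen_interior, hf3⟩
  rw [← (extChartAt I x₀).right_inv hf3']
  exact hasFDerivWithinAt_tangentCoordChange ⟨hft1, hft2⟩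

/-- Uniform-time existence of integral curves on a compact set. -/
theorem exists_forall_isIntegralCurveOn_of_isCompact [BoundarylessManifold I M]
    (hv : ContMDiff I I.tangent 1 (fun x ↦ (⟨x, v x⟩ : TangentBundle I M)))
    {K : Set M} (hK : IsCompact K) :
    ∃ ε > (0:ℝ), ∀ z ∈ K, ∃ γ : ℝ → M, γ 0 = z ∧
      IsMIntegralCurveOn γ v (Ioo (-ε) ε) := by
  choose! ε hε U hU hsol using fun y : M =>
    exists_nhds_isIntegralCurveOn hv y BoundarylessManifold.isInteriorPoint
  obtain ⟨t, htK, hcov⟩ := hK.elim_nhds_subcover U (fun y _ => hU y)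
  rcases t.eq_empty_or_nonempty with rfl | hne
  · refine ⟨1, one_pos, fun z hz => absurd (hcov hz) (by simp)⟩
  refine ⟨t.inf' hne ε, ?_, fun z hz => ?_⟩
  · obtain ⟨y, hy, hyeq⟩ := t.exists_mem_eq_inf' hne ε
    rw [hyeq]; exact hε y
  · obtain ⟨y, hyt, hzU⟩ := by simpa using hcov hz
    obtain ⟨γ, h0, hγ⟩ := hsol y z hzU
    exact ⟨γ, h0, hγ.mono <| Ioo_subset_Ioo
      (neg_le_neg (t.inf'_le ε hyt)) (t.inf'_le ε hyt)⟩

end Mfd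

section Push

variable {d m : ℕ} {M : Type} [TopologicalSpace M]
    [ChartedSpace (EuclideanSpace ℝ (Fin d)) M]
    [IsManifold (𝓡 d) ((⊤ : ℕ∞) : WithTop ℕ∞) M]
    {π : M → EuclideanSpace ℝ (Fin m)}
    {v : EuclideanSpace ℝ (Fin m)}
    {χ : (x : M) → TangentSpace (𝓡 d) x}

/-- An integral curve of a vector field lifting the constant field `v` through `π`
projects to a straight line. -/
lemma pi_comp_integralCurve_eq
    (hπsmooth : ContMDiff (𝓡 d) (𝓡 m) (⊤ : ℕ∞) π)
    (hχlift : ∀ p : M, mfderiv (𝓡 d) (𝓡 m) π p (χ p) = v)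
    {γ : ℝ → M} {x : M} {a : ℝ} (h0 : γ 0 = x) (ha : 0 < a)
    (hγ : IsMIntegralCurveOn γ χ (Ioo (-a) a)) :
    ∀ t ∈ Ioo (-a) a, π (γ t) = π x + t • v := by
  have hderiv : ∀ t ∈ Ioo (-a) a, HasDerivAt (fun s => π (γ s)) v t := by
    intro t ht
    have hπd : HasMFDerivAt (𝓡 d) (𝓡 m) π (γ t)
        (mfderiv (𝓡 d) (𝓡 m) π (γ t)) :=
      ((hπsmooth (γ t)).mdifferentiableAt (by simp)).hasMFDerivAt
    have hc := hπd.comp t ((hγ.isMIntegralCurveAt (Ioo_mem_nhds ht.1 ht.2)).hasMFDerivAt)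
    have heq : (mfderiv (𝓡 d) (𝓡 m) π (γ t)).comp
        ((1 : ℝ →L[ℝ] ℝ).smulRight (χ (γ t))) = (1 : ℝ →L[ℝ] ℝ).smulRight v := by
      apply ContinuousLinearMap.ext_ring
      show (mfderiv (𝓡 d) (𝓡 m) π (γ t)) (((1 : ℝ →L[ℝ] ℝ) 1) • χ (γ t))
        = ((1 : ℝ →L[ℝ] ℝ) 1) • v
      rw [ContinuousLinearMap.one_apply, one_smul, one_smul, hχlift]
    have hc2 := hc.congr_mfderiv heq
    rw [hasDerivAt_iff_hasFDerivAt]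
    exact hasMFDerivAt_iff_hasFDerivAt.mp hc2
  intro t ht
  set F : ℝ → EuclideanSpace ℝ (Fin m) := fun s => π (γ s) - s • v with hF
  have hFd : ∀ s ∈ Ioo (-a) a, HasDerivAt F 0 s := by
    intro s hs
    have := (hderiv s hs).sub ((hasDerivAt_id s).smul_const v)
    rw [show (0 : EuclideanSpace ℝ (Fin m)) = v - (1:ℝ) • v by simp]
    exact this
  have h0mem : (0:ℝ) ∈ Ioo (-a) a := ⟨by linarith, ha⟩
  have hconst : F t = F 0 := by
    apply (convex_Ioo (-a) a).is_const_of_fderivWithin_eq_zero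
      (fun s hs => ((hFd s hs).differentiableAt).differentiableWithinAt)
      (fun s hs => ?_) ht h0mem
    rw [fderivWithin_of_isOpen isOpen_Ioo hs,
      (hasDerivAt_iff_hasFDerivAt.mp (hFd s hs)).fderiv]
    exact ContinuousLinearMap.ext fun y => by simp
  have : π (γ t) - t • v = π x - (0:ℝ) • v := by
    rw [← h0]
    simpa [hF] using hconst
  simp only [zero_smul, sub_zero] at this
  rw [← this]; abel

end Push

/-- If `π : M → ℝ^m` is a smooth proper map and `χ` is a smooth
vector field on `M` with `dπ_p (χ p) = v` everywhere, then the flow of `χ` is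
complete: through every point there is an integral curve of `χ` defined on all
of `ℝ`. -/
theorem flow_complete_of_proper_of_mfderiv_eq_const
    {d m : ℕ} (M : Type) [TopologicalSpace M] [T2Space M]
    [SecondCountableTopology M] [ChartedSpace (EuclideanSpace ℝ (Fin d)) M]
    [IsManifold (𝓡 d) ((⊤ : ℕ∞) : WithTop ℕ∞) M]
    (π : M → EuclideanSpace ℝ (Fin m))
    (hπsmooth : ContMDiff (𝓡 d) (𝓡 m) (⊤ : ℕ∞) π)
    (hπproper : ∀ K : Set (EuclideanSpace ℝ (Fin m)), IsCompact K →
      IsCompact (π ⁻¹' K))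
    (v : EuclideanSpace ℝ (Fin m))
    (χ : (x : M) → TangentSpace (𝓡 d) x)
    (hχsmooth : ContMDiff (𝓡 d) (𝓡 d).tangent (⊤ : ℕ∞)
      (fun x => (⟨x, χ x⟩ : TangentBundle (𝓡 d) M)))
    (hχlift : ∀ p : M, mfderiv (𝓡 d) (𝓡 m) π p (χ p) = v) :
    ∀ x : M, ∃ γ : ℝ → M, γ 0 = x ∧ IsMIntegralCurve γ χ := by
  intro x
  have hχ1 : ContMDiff (𝓡 d) (𝓡 d).tangent 1
      (fun x => (⟨x, χ x⟩ : TangentBundle (𝓡 d) M)) := hχsmooth.of_le (by simp)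
  set s := { a | ∃ γ : ℝ → M, γ 0 = x ∧ IsMIntegralCurveOn γ χ (Ioo (-a) a) } with hsdef
  suffices hbdd : ¬BddAbove s by
    rw [not_bddAbove_iff] at hbdd
    rw [exists_isMIntegralCurve_iff_exists_isMIntegralCurveOn_Ioo hχ1]
    intro a
    obtain ⟨y, ⟨γ, hγ1, hγ2⟩, hlt⟩ := hbdd a
    exact ⟨γ, hγ1, hγ2.mono <| Ioo_subset_Ioo (neg_le_neg hlt.le) hlt.le⟩
  intro hbdd
  -- `s` is nonempty by local existence
  obtain ⟨ε₀, hε₀, U, hU, hsol₀⟩ :=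
    exists_nhds_isIntegralCurveOn hχ1 x BoundarylessManifold.isInteriorPoint
  have hε₀s : ε₀ ∈ s := hsol₀ x (mem_of_mem_nhds hU)
  have hne : s.Nonempty := ⟨ε₀, hε₀s⟩
  set asup := sSup s with hasup
  have hsuppos : 0 < asup := lt_of_lt_of_le hε₀ (le_csSup hbdd hε₀s)
  -- the compact set where all short-time curves through `x` live
  set K := π ⁻¹' (closedBall (π x) (asup * ‖v‖ + 1)) with hKdef
  have hKcomp : IsCompact K := hπproper _ (isCompact_closedBall _ _)
  obtain ⟨ε, hε, h⟩ := exists_forall_isIntegralCurveOn_of_isCompact hχ1 hKcomp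
  have hmemK : ∀ (γ : ℝ → M) (a : ℝ), γ 0 = x → 0 < a → a ≤ asup →
      IsMIntegralCurveOn γ χ (Ioo (-a) a) → ∀ t ∈ Ioo (-a) a, γ t ∈ K := by
    intro γ a h0 ha hale hγ t ht
    have hline := pi_comp_integralCurve_eq hπsmooth hχlift h0 ha hγ t ht
    rw [hKdef, mem_preimage, hline, mem_closedBall, dist_eq_norm, add_sub_cancel_left,
      norm_smul, Real.norm_eq_abs]
    have h1 : |t| ≤ a := abs_le.mpr ⟨ht.1.le, ht.2.le⟩
    nlinarith [norm_nonneg v, abs_nonneg t]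
  have hxK : x ∈ K := by
    rw [hKdef, mem_preimage, mem_closedBall, dist_self]
    nlinarith [norm_nonneg v]
  have hεs : ε ∈ s := h x hxK
  have hεle : ε ≤ asup := le_csSup hbdd hεs
  -- pick a curve defined on almost the maximal interval
  obtain ⟨a, ha, hlt⟩ := Real.add_neg_lt_sSup hne (ε := - (ε / 2))
    (by rw [neg_lt, neg_zero]; exact half_pos hε)
  rw [mem_setOf] at ha
  rw [← hasup, ← sub_eq_add_neg] at hlt
  obtain ⟨γ, h0, hγ⟩ := ha
  have halea : a ≤ asup := le_csSup hbdd ⟨γ, h0, hγ⟩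
  have hapos : 0 < a := by linarith
  -- the two endpoints used for the gluing lie in `K`
  have hmem1 : γ (-(asup - ε / 2)) ∈ K :=
    hmemK γ a h0 hapos halea hγ _ ⟨by linarith, by linarith⟩
  have hmem2 : γ (asup - ε / 2) ∈ K :=
    hmemK γ a h0 hapos halea hγ _ ⟨by linarith, hlt⟩
  -- integral curve starting at `-(asup - ε / 2)` with radius `ε`
  obtain ⟨γ1_aux, h1_aux, hγ1⟩ := h _ hmem1
  rw [← isMIntegralCurveOn_comp_add (dt := asup - ε / 2)] at hγ1
  set γ1 := γ1_aux ∘ (· + (asup - ε / 2)) with γ1_def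
  have heq1 : γ1 (-(asup - ε / 2)) = γ (-(asup - ε / 2)) := by simp [γ1_def, h1_aux]
  -- integral curve starting at `asup - ε / 2` with radius `ε`
  obtain ⟨γ2_aux, h2_aux, hγ2⟩ := h _ hmem2
  rw [← isMIntegralCurveOn_comp_sub (dt := asup - ε / 2)] at hγ2
  set γ2 := γ2_aux ∘ (· - (asup - ε / 2)) with γ2_def
  have heq2 : γ2 (asup - ε / 2) = γ (asup - ε / 2) := by simp [γ2_def, h2_aux]
  -- rewrite shifted Ioo as Ioo
  have hset1 : {t | t + (asup - ε / 2) ∈ Ioo (-ε) ε} =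
      Ioo (-(asup - ε / 2) - ε) (-(asup - ε / 2) + ε) := by
    ext t; simp only [mem_setOf_eq, mem_Ioo]
    constructor <;> intro h <;> constructor <;> linarith [h.1, h.2]
  have hset2 : {t | t - (asup - ε / 2) ∈ Ioo (-ε) ε} =
      Ioo ((asup - ε / 2) - ε) ((asup - ε / 2) + ε) := by
    ext t; simp only [mem_setOf_eq, mem_Ioo]
    constructor <;> intro h <;> constructor <;> linarith [h.1, h.2]
  rw [hset1] at hγ1
  rw [hset2] at hγ2
  -- extend `γ` on the left by `γ1` and on the right by `γ2`
  set γ_ext : ℝ → M := piecewise (Ioo (-(asup + ε / 2)) a)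
    (piecewise (Ioo (-a) a) γ γ1) γ2 with γ_ext_def
  have heq_ext : γ_ext 0 = x := by
    rw [γ_ext_def, piecewise, if_pos ⟨by linarith, by linarith⟩, piecewise,
      if_pos ⟨by linarith, by linarith⟩, h0]
  -- `asup + ε / 2` is an element of `s` greater than `asup`, a contradiction
  suffices hext : IsMIntegralCurveOn γ_ext χ (Ioo (-(asup + ε / 2)) (asup + ε / 2)) from
    (not_lt.mpr <| le_csSup hbdd ⟨γ_ext, heq_ext, hext⟩) <| lt_add_of_pos_right asup (half_pos hε)
  apply (isMIntegralCurveOn_piecewise (t₀ := asup - ε / 2) hχ1 _ hγ2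
      ⟨⟨by linarith, hlt⟩, ⟨by linarith, by linarith⟩⟩
      (by rw [piecewise, if_pos ⟨by linarith, hlt⟩, ← heq2])).mono
    (Ioo_subset_Ioo_union_Ioo le_rfl (by linarith) (by linarith))
  exact (isMIntegralCurveOn_piecewise (t₀ := -(asup - ε / 2)) hχ1 hγ hγ1
      ⟨⟨neg_lt_neg hlt, by linarith⟩, ⟨by linarith, by linarith⟩⟩ heq1.symm).mono
    (union_comm _ _ ▸ Ioo_subset_Ioo_union_Ioo (by linarith) (by linarith) le_rfl)
end

section
/- Let ℍ = {u ∈ ℂ : Im u > 0} be the upper half plane, and for u ∈ ℍ let Λ_u = ℤ + ℤ·u ⊆ ℂ denote the additive subgroup of ℂ generated by 1 and u. Suppose a : ℍ → ℂ is a continuous function such that a(u) · Λ_u = Λ_u (as subsets of ℂ) for every u ∈ ℍ. Then either a(u) = 1 for all u ∈ ℍ, or a(u) = −1 for all u ∈ ℍ. -/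
open UpperHalfPlane

lemma lattice_coeff_unique (u : ℍ) {m n m' n' : ℤ}
    (h : (m : ℂ) + (n : ℂ) * (u : ℂ) = (m' : ℂ) + (n' : ℂ) * (u : ℂ)) :
    m = m' ∧ n = n' := by
  have him : (n : ℝ) * (u : ℂ).im = (n' : ℝ) * (u : ℂ).im := by
    have := congrArg Complex.im h
    simpa using this
  have hu : (u : ℂ).im ≠ 0 := ne_of_gt u.2
  have hn : (n : ℝ) = (n' : ℝ) := mul_right_cancel₀ hu him
  have hn' : n = n' := by exact_mod_cast hn
  subst hn'
  have hre := congrArg Complex.re h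
  simp at hre
  exact ⟨by exact_mod_cast hre, rfl⟩

/-- A function `ℍ → ℤ` whose real cast is continuous is constant. -/
lemma int_valued_const {g : ℍ → ℤ} (hg : Continuous fun u => (g u : ℝ)) (u v : ℍ) :
    g u = g v := by
  have hc : Continuous g :=
    (Int.isClosedEmbedding_coe_real.isEmbedding.continuous_iff).2 hg
  have : IsLocallyConstant g := (IsLocallyConstant.iff_continuous g).2 hc
  exact this.apply_eq_of_preconnectedSpace u v

/-- If `a : ℍ → ℂ` is continuous and multiplication by `a u`
preserves the lattice `Λ_u = ℤ + ℤ·u` for every `u ∈ ℍ`, then `a ≡ 1` or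
`a ≡ -1`. -/
theorem continuous_lattice_preserving_is_pm_one
    (a : ℍ → ℂ) (ha : Continuous a)
    (hlat : ∀ u : ℍ,
      (fun z : ℂ => a u * z) '' {z : ℂ | ∃ m n : ℤ, z = (m : ℂ) + (n : ℂ) * (u : ℂ)}
        = {z : ℂ | ∃ m n : ℤ, z = (m : ℂ) + (n : ℂ) * (u : ℂ)}) :
    (∀ u : ℍ, a u = 1) ∨ (∀ u : ℍ, a u = -1) := by
  -- a u lies in the lattice
  have hA : ∀ u : ℍ, ∃ m n : ℤ, a u = (m : ℂ) + (n : ℂ) * (u : ℂ) := by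
    intro u
    have h1 : (1 : ℂ) ∈ {z : ℂ | ∃ m n : ℤ, z = (m : ℂ) + (n : ℂ) * (u : ℂ)} :=
      ⟨1, 0, by simp⟩
    have : a u * 1 ∈ {z : ℂ | ∃ m n : ℤ, z = (m : ℂ) + (n : ℂ) * (u : ℂ)} := by
      rw [← hlat u]; exact ⟨1, h1, rfl⟩
    simpa using this
  -- some lattice element maps to 1
  have hB : ∀ u : ℍ, ∃ m n : ℤ, a u * ((m : ℂ) + (n : ℂ) * (u : ℂ)) = 1 := by
    intro u
    have h1 : (1 : ℂ) ∈ {z : ℂ | ∃ m n : ℤ, z = (m : ℂ) + (n : ℂ) * (u : ℂ)} :=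
      ⟨1, 0, by simp⟩
    rw [← hlat u] at h1
    obtain ⟨z, ⟨m, n, rfl⟩, hz⟩ := h1
    exact ⟨m, n, hz⟩
  choose M N hMN using hA
  choose M' N' hMN' using hB
  set b : ℍ → ℂ := fun u => (a u)⁻¹ with hb
  have hane : ∀ u, a u ≠ 0 := by
    intro u h
    have := hMN' u
    rw [h, zero_mul] at this
    exact one_ne_zero this.symm
  have hbval : ∀ u, b u = (M' u : ℂ) + (N' u : ℂ) * (u : ℂ) := by
    intro u
    rw [hb]
    exact inv_eq_of_mul_eq_one_right (hMN' u)
  have hbcont : Continuous b := ha.inv₀ hane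
  -- N is constant
  have hNcast : ∀ u : ℍ, (N u : ℝ) = (a u).im / (u : ℂ).im := by
    intro u
    have := congrArg Complex.im (hMN u)
    simp at this
    rw [this]
    exact (mul_div_cancel_right₀ _ (ne_of_gt u.2)).symm
  have hMcast : ∀ u : ℍ, (M u : ℝ) = (a u).re - (N u : ℝ) * (u : ℂ).re := by
    intro u
    have := congrArg Complex.re (hMN u)
    simp at this
    rw [this]; simp [UpperHalfPlane.coe_re]
  have hNcast' : ∀ u : ℍ, (N' u : ℝ) = (b u).im / (u : ℂ).im := by
    intro u
    have := congrArg Complex.im (hbval u)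
    simp at this
    rw [this]
    exact (mul_div_cancel_right₀ _ (ne_of_gt u.2)).symm
  have hMcast' : ∀ u : ℍ, (M' u : ℝ) = (b u).re - (N' u : ℝ) * (u : ℂ).re := by
    intro u
    have := congrArg Complex.re (hbval u)
    simp at this
    rw [this]; simp [UpperHalfPlane.coe_re]
  have huim : Continuous fun u : ℍ => (u : ℂ).im :=
    Complex.continuous_im.comp continuous_coe
  have huimne : ∀ u : ℍ, (u : ℂ).im ≠ 0 := fun u => ne_of_gt u.2
  have hure : Continuous fun u : ℍ => (u : ℂ).re :=
    Complex.continuous_re.comp continuous_coe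
  have hNc : Continuous fun u => (N u : ℝ) := by
    simp only [hNcast]
    exact (Complex.continuous_im.comp ha).div huim huimne
  have hMc : Continuous fun u => (M u : ℝ) := by
    simp only [hMcast]
    exact ((Complex.continuous_re.comp ha).sub (hNc.mul hure))
  have hNc' : Continuous fun u => (N' u : ℝ) := by
    simp only [hNcast']
    exact (Complex.continuous_im.comp hbcont).div huim huimne
  have hMc' : Continuous fun u => (M' u : ℝ) := by
    simp only [hMcast']
    exact ((Complex.continuous_re.comp hbcont).sub (hNc'.mul hure))
  -- evaluate at I and 2I
  set uI : ℍ := UpperHalfPlane.I with huI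
  have hNconst : ∀ u, N u = N uI := fun u => int_valued_const hNc u uI
  have hMconst : ∀ u, M u = M uI := fun u => int_valued_const hMc u uI
  have hNconst' : ∀ u, N' u = N' uI := fun u => int_valued_const hNc' u uI
  have hMconst' : ∀ u, M' u = M' uI := fun u => int_valued_const hMc' u uI
  set m : ℤ := M uI
  set n : ℤ := N uI
  set m' : ℤ := M' uI
  set n' : ℤ := N' uI
  have key : ∀ u : ℍ, ((m : ℂ) + n * u) * ((m' : ℂ) + n' * u) = 1 := by
    intro u
    have h := hMN' u
    rw [hMN u, hMconst u, hNconst u, hMconst' u, hNconst' u] at h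
    exact h
  have u2 : ℍ := ⟨2 * Complex.I, by simp⟩
  have hcoeI : (uI : ℂ) = Complex.I := by
    simp [huI, UpperHalfPlane.coe_I]
  have h1 := key uI
  have h2 := key (⟨2 * Complex.I, by simp⟩ : ℍ)
  rw [hcoeI] at h1
  have h2' : ((m : ℂ) + n * (2 * Complex.I)) * ((m' : ℂ) + n' * (2 * Complex.I)) = 1 := h2
  -- extract real/imaginary equations
  have e1 : (m : ℝ) * m' - n * n' = 1 := by
    have := congrArg Complex.re h1
    simp [Complex.add_re, Complex.mul_re] at this
    linarith [this]
  have e2 : (m : ℝ) * n' + m' * n = 0 := by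
    have := congrArg Complex.im h1
    simp [Complex.add_im, Complex.mul_im] at this
    linarith [this]
  have e3 : (m : ℝ) * m' - 4 * (n * n') = 1 := by
    have := congrArg Complex.re h2'
    simp [Complex.add_re, Complex.mul_re] at this
    linarith [this]
  -- integer versions
  have E1 : m * m' - n * n' = 1 := by exact_mod_cast e1
  have E2 : m * n' + m' * n = 0 := by exact_mod_cast e2
  have E3 : m * m' - 4 * (n * n') = 1 := by exact_mod_cast e3
  have hnn : n * n' = 0 := by linarith
  have hmm : m * m' = 1 := by linarith
  have hm : (m = 1 ∧ m' = 1) ∨ (m = -1 ∧ m' = -1) := by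
    rcases Int.eq_one_or_neg_one_of_mul_eq_one' hmm with h | h
    · exact Or.inl h
    · exact Or.inr h
  have hn0 : n = 0 := by
    rcases hm with ⟨h1', h2''⟩ | ⟨h1', h2''⟩ <;> rw [h1', h2''] at E2 <;> nlinarith [hnn, sq_nonneg n]
  rcases hm with ⟨h1', _⟩ | ⟨h1', _⟩
  · left
    intro u
    rw [hMN u, hMconst u, hNconst u, hn0, h1']
    simp
  · right
    intro u
    rw [hMN u, hMconst u, hNconst u, hn0, h1']
    simp
end
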